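/- If p ≥ q ≥ 2 and d = gcd(p,q) satisfies 1 ≤ d < q, then the minimum nonzero value of ν(x^p − y^q) − ν(x^p − y^q + x^a y^b) over monomials x^a y^b with (a,b) ∈ ℕ² on or below the axes side of the segment from (p,0) to (0,q) equals d. -/

import Mathlib

open MvPolynomial MeasureTheory

/-- The region `Γ₊(f)`: convex closure of the union of translated positive quadrants at the
points of the support of `f` (omitting the origin). -/
noncomputable def gammaPlus (f : MvPolynomial (Fin 2) ℂ) : Set (ℝ × ℝ) :=
  convexHull ℝ (⋃ m ∈ {m ∈ f.support | m ≠ 0},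
    {z : ℝ × ℝ | (m 0 : ℝ) ≤ z.1 ∧ (m 1 : ℝ) ≤ z.2})

/-- The region bounded by the Newton polygon `Γ(f)` and the coordinate axes. -/
noncomputable def newtonRegion (f : MvPolynomial (Fin 2) ℂ) : Set (ℝ × ℝ) :=
  {z : ℝ × ℝ | 0 ≤ z.1 ∧ 0 ≤ z.2} \ gammaPlus f

/-- The Newton number `ν(f) = 2S - a - b + 1` where `S` is the area of the region bounded
by the Newton polygon and the axes and `a`, `b` are the lengths of the intersections of that
region with the `x`- and `y`-axis. -/
noncomputable def newtonNumber (f : MvPolynomial (Fin 2) ℂ) : ℝ :=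
  2 * (volume (newtonRegion f)).toReal
    - (volume {x : ℝ | (x, (0:ℝ)) ∈ newtonRegion f}).toReal
    - (volume {y : ℝ | ((0:ℝ), y) ∈ newtonRegion f}).toReal + 1

namespace NondegJump

open Set

lemma null_axis : volume {z : ℝ × ℝ | z.2 = 0} = 0 := by
  have h : {z : ℝ × ℝ | z.2 = 0} = (univ : Set ℝ) ×ˢ ({0} : Set ℝ) := by
    ext ⟨x, y⟩; simp [Set.mem_prod, eq_comm]
  rw [h, Measure.volume_eq_prod, Measure.prod_prod]
  simp

lemma vol_strip (l r c m : ℝ) (hlr : l ≤ r) (h : ∀ x ∈ Ico l r, 0 ≤ c + m * x) :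
    volume {z : ℝ × ℝ | z.1 ∈ Ico l r ∧ z.2 ∈ Ico 0 (c + m * z.1)} =
      ENNReal.ofReal ((r - l) * c + m * (r ^ 2 - l ^ 2) / 2) := by
  set φ : ℝ → ℝ := fun x => c + m * x with hφ
  have hcont : Continuous φ := by continuity
  have hint : IntegrableOn φ (Ico l r) :=
    (hcont.continuousOn).integrableOn_Icc.mono_set Set.Ico_subset_Icc_self
  have h0int : IntegrableOn (fun _ : ℝ => (0:ℝ)) (Ico l r) :=
    integrableOn_const measure_Ico_lt_top.ne
  have hreg : volume (regionBetween (fun _ => (0:ℝ)) φ (Ico l r)) =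
      ENNReal.ofReal ((r - l) * c + m * (r ^ 2 - l ^ 2) / 2) := by
    rw [Measure.volume_eq_prod,
      volume_regionBetween_eq_integral h0int hint measurableSet_Ico (fun x hx => h x hx)]
    have hfun : ((φ - fun _ => (0:ℝ)) : ℝ → ℝ) = φ := by funext x; simp
    have hval : ∫ x in Ico l r, φ x = (r - l) * c + m * (r ^ 2 - l ^ 2) / 2 := by
      rw [integral_Ico_eq_integral_Ioo, ← integral_Ioc_eq_integral_Ioo,
        ← intervalIntegral.integral_of_le hlr, hφ]
      rw [intervalIntegral.integral_add intervalIntegrable_const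
        ((intervalIntegral.intervalIntegrable_id).const_mul m)]
      rw [intervalIntegral.integral_const, intervalIntegral.integral_const_mul, integral_id]
      simp [smul_eq_mul]; ring
    rw [hfun, hval]
  have hsub : regionBetween (fun _ => (0:ℝ)) φ (Ico l r) ⊆
      {z : ℝ × ℝ | z.1 ∈ Ico l r ∧ z.2 ∈ Ico 0 (φ z.1)} := by
    rintro ⟨x, y⟩ ⟨hx, hy⟩; exact ⟨hx, le_of_lt hy.1, hy.2⟩
  have hsup : {z : ℝ × ℝ | z.1 ∈ Ico l r ∧ z.2 ∈ Ico 0 (φ z.1)} ⊆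
      regionBetween (fun _ => (0:ℝ)) φ (Ico l r) ∪ {z : ℝ × ℝ | z.2 = 0} := by
    rintro ⟨x, y⟩ ⟨hx, hy0, hy1⟩
    rcases eq_or_lt_of_le hy0 with h' | h'
    · exact Or.inr h'.symm
    · exact Or.inl ⟨hx, h', hy1⟩
  refine le_antisymm ?_ ?_
  · calc volume {z : ℝ × ℝ | z.1 ∈ Ico l r ∧ z.2 ∈ Ico 0 (φ z.1)}
        ≤ volume (regionBetween (fun _ => (0:ℝ)) φ (Ico l r) ∪ {z : ℝ × ℝ | z.2 = 0}) :=
          measure_mono hsup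
      _ ≤ _ + _ := measure_union_le _ _
      _ = ENNReal.ofReal ((r - l) * c + m * (r ^ 2 - l ^ 2) / 2) := by
          rw [hreg, null_axis, add_zero]
  · rw [← hreg]; exact measure_mono hsub

/-- The translated positive quadrant at `v`. -/
def quad (v : ℝ × ℝ) : Set (ℝ × ℝ) := {z | v.1 ≤ z.1 ∧ v.2 ≤ z.2}

lemma halfplane_convex (c₁ c₂ d : ℝ) : Convex ℝ {z : ℝ × ℝ | d ≤ c₁ * z.1 + c₂ * z.2} := by
  have : IsLinearMap ℝ (fun z : ℝ × ℝ => c₁ * z.1 + c₂ * z.2) := by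
    constructor
    · intro x y; simp; ring
    · intro t x; simp [smul_eq_mul]; ring
  exact convex_halfSpace_ge this d

lemma hull_subset_halfplane (U : Set (ℝ × ℝ)) (c₁ c₂ d : ℝ) (hU : U ⊆ {z : ℝ × ℝ | d ≤ c₁ * z.1 + c₂ * z.2}) :
    convexHull ℝ U ⊆ {z : ℝ × ℝ | d ≤ c₁ * z.1 + c₂ * z.2} :=
  convexHull_min hU (halfplane_convex c₁ c₂ d)

lemma quad_subset_halfplane (v : ℝ × ℝ) (c₁ c₂ d : ℝ) (hc₁ : 0 ≤ c₁) (hc₂ : 0 ≤ c₂)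
    (hv : d ≤ c₁ * v.1 + c₂ * v.2) :
    quad v ⊆ {z : ℝ × ℝ | d ≤ c₁ * z.1 + c₂ * z.2} := by
  rintro ⟨x, y⟩ ⟨h1, h2⟩
  simp only [mem_setOf_eq] at *
  nlinarith

/-- Any point dominating a point of the segment between `A` and `B` lies in the hull of
`quad A ∪ quad B` (hence in the hull of any `U` containing these quadrants). -/
lemma seg_dominated_mem_hull (U : Set (ℝ × ℝ)) (A B : ℝ × ℝ)
    (hA : quad A ⊆ U) (hB : quad B ⊆ U) (z : ℝ × ℝ) (t : ℝ) (ht0 : 0 ≤ t) (ht1 : t ≤ 1)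
    (h1 : t * A.1 + (1 - t) * B.1 ≤ z.1) (h2 : t * A.2 + (1 - t) * B.2 ≤ z.2) :
    z ∈ convexHull ℝ U := by
  set w : ℝ × ℝ := (t * A.1 + (1 - t) * B.1, t * A.2 + (1 - t) * B.2) with hw
  have hzA : (A.1 + (z.1 - w.1), A.2 + (z.2 - w.2)) ∈ U := hA ⟨by simp [hw]; linarith, by simp [hw]; linarith⟩
  have hzB : (B.1 + (z.1 - w.1), B.2 + (z.2 - w.2)) ∈ U := hB ⟨by simp [hw]; linarith, by simp [hw]; linarith⟩
  have : z = t • ((A.1 + (z.1 - w.1), A.2 + (z.2 - w.2)) : ℝ × ℝ)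
      + (1 - t) • ((B.1 + (z.1 - w.1), B.2 + (z.2 - w.2)) : ℝ × ℝ) := by
    apply Prod.ext <;> simp [hw, smul_eq_mul] <;> ring
  rw [this]
  exact convex_convexHull ℝ U (subset_convexHull ℝ U hzA) (subset_convexHull ℝ U hzB)
    ht0 (by linarith) (by ring)

lemma hull_two (P Q : ℝ) (hP : 0 < P) (hQ : 0 < Q) (V : Set (ℝ × ℝ))
    (hAV : (P, (0:ℝ)) ∈ V) (hBV : ((0:ℝ), Q) ∈ V)
    (hV : ∀ v ∈ V, 0 ≤ v.1 ∧ 0 ≤ v.2 ∧ P * Q ≤ Q * v.1 + P * v.2) :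
    convexHull ℝ (⋃ v ∈ V, quad v) =
      {z : ℝ × ℝ | 0 ≤ z.1 ∧ 0 ≤ z.2 ∧ P * Q ≤ Q * z.1 + P * z.2} := by
  have hU : ∀ v ∈ V, quad v ⊆ ⋃ v ∈ V, quad v := fun v hv => subset_biUnion_of_mem hv
  apply le_antisymm
  · intro z hz
    refine ⟨?_, ?_, ?_⟩
    · have := hull_subset_halfplane (⋃ v ∈ V, quad v) 1 0 0
        (iUnion₂_subset fun v hv => quad_subset_halfplane v 1 0 0 zero_le_one le_rfl
          (by simpa using (hV v hv).1)) hz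
      simpa using this
    · have := hull_subset_halfplane (⋃ v ∈ V, quad v) 0 1 0
        (iUnion₂_subset fun v hv => quad_subset_halfplane v 0 1 0 le_rfl zero_le_one
          (by simpa using (hV v hv).2.1)) hz
      simpa using this
    · exact hull_subset_halfplane (⋃ v ∈ V, quad v) Q P (P*Q)
        (iUnion₂_subset fun v hv => quad_subset_halfplane v Q P (P*Q) hQ.le hP.le
          (hV v hv).2.2) hz
  · rintro ⟨x, y⟩ ⟨hx, hy, hline⟩
    replace hx : 0 ≤ x := hx
    replace hy : 0 ≤ y := hy
    replace hline : P * Q ≤ Q * x + P * y := hline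
    by_cases hxP : P ≤ x
    · exact seg_dominated_mem_hull _ (P, 0) ((0:ℝ), Q) (hU _ hAV) (hU _ hBV) (x, y) 1
        zero_le_one le_rfl (by simpa using hxP) (by simpa using hy)
    · push_neg at hxP
      obtain ⟨t, ht, ht0, ht1⟩ : ∃ t : ℝ, t * P = x ∧ 0 ≤ t ∧ t ≤ 1 :=
        ⟨x / P, by field_simp, by positivity, by rw [div_le_one hP]; exact hxP.le⟩
      refine seg_dominated_mem_hull _ (P, 0) ((0:ℝ), Q) (hU _ hAV) (hU _ hBV) (x, y) t
        ht0 ht1 ?_ ?_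
      · simp only
        have : t * P + (1 - t) * 0 = x := by linear_combination ht
        linarith
      · simp only
        rw [← mul_le_mul_iff_of_pos_right hP]
        have key : (t * 0 + (1 - t) * Q) * P = P * Q - x * Q := by linear_combination -Q * ht
        rw [key]; nlinarith [hline]

lemma hull_three (p q a b : ℝ) (ha : 0 < a) (hap : a < p) (hb : 0 < b) (hbq : b < q)
    (hs : q * a + p * b < p * q) (V : Set (ℝ × ℝ))
    (hAV : (p, (0:ℝ)) ∈ V) (hBV : ((0:ℝ), q) ∈ V) (hMV : (a, b) ∈ V)
    (hV : ∀ v ∈ V, 0 ≤ v.1 ∧ 0 ≤ v.2 ∧ b * p ≤ b * v.1 + (p - a) * v.2 ∧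
      a * q ≤ (q - b) * v.1 + a * v.2) :
    convexHull ℝ (⋃ v ∈ V, quad v) =
      {z : ℝ × ℝ | 0 ≤ z.1 ∧ 0 ≤ z.2 ∧ b * p ≤ b * z.1 + (p - a) * z.2 ∧
        a * q ≤ (q - b) * z.1 + a * z.2} := by
  have hpa : (0:ℝ) < p - a := by linarith
  have hqb : (0:ℝ) < q - b := by linarith
  have hU : ∀ v ∈ V, quad v ⊆ ⋃ v ∈ V, quad v := fun v hv => subset_biUnion_of_mem hv
  apply le_antisymm
  · intro z hz
    refine ⟨?_, ?_, ?_, ?_⟩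
    · have := hull_subset_halfplane (⋃ v ∈ V, quad v) 1 0 0
        (iUnion₂_subset fun v hv => quad_subset_halfplane v 1 0 0 zero_le_one le_rfl
          (by simpa using (hV v hv).1)) hz
      simpa using this
    · have := hull_subset_halfplane (⋃ v ∈ V, quad v) 0 1 0
        (iUnion₂_subset fun v hv => quad_subset_halfplane v 0 1 0 le_rfl zero_le_one
          (by simpa using (hV v hv).2.1)) hz
      simpa using this
    · exact hull_subset_halfplane (⋃ v ∈ V, quad v) b (p - a) (b*p)
        (iUnion₂_subset fun v hv => quad_subset_halfplane v b (p - a) (b*p) hb.le hpa.le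
          (hV v hv).2.2.1) hz
    · exact hull_subset_halfplane (⋃ v ∈ V, quad v) (q - b) a (a*q)
        (iUnion₂_subset fun v hv => quad_subset_halfplane v (q - b) a (a*q) hqb.le ha.le
          (hV v hv).2.2.2) hz
  · rintro ⟨x, y⟩ ⟨hx, hy, hl1, hl2⟩
    replace hx : 0 ≤ x := hx
    replace hy : 0 ≤ y := hy
    replace hl1 : b * p ≤ b * x + (p - a) * y := hl1
    replace hl2 : a * q ≤ (q - b) * x + a * y := hl2
    by_cases hxp : p ≤ x
    · exact seg_dominated_mem_hull _ (p, 0) ((0:ℝ), q) (hU _ hAV) (hU _ hBV) (x, y) 1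
        zero_le_one le_rfl (by simpa using hxp) (by simpa using hy)
    · push_neg at hxp
      by_cases hxa : a ≤ x
      · obtain ⟨t, ht, ht0, ht1⟩ : ∃ t : ℝ, t * (p - a) = p - x ∧ 0 ≤ t ∧ t ≤ 1 :=
          ⟨(p - x) / (p - a), by field_simp, div_nonneg (by linarith) hpa.le,
            by rw [div_le_one hpa]; linarith⟩
        refine seg_dominated_mem_hull _ (a, b) (p, (0:ℝ)) (hU _ hMV) (hU _ hAV) (x, y) t
          ht0 ht1 ?_ ?_
        · simp only
          have : t * a + (1 - t) * p = x := by linear_combination -ht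
          linarith
        · simp only
          rw [← mul_le_mul_iff_of_pos_right hpa]
          have key : (t * b + (1 - t) * 0) * (p - a) = b * (p - x) := by
            linear_combination b * ht
          rw [key]; nlinarith [hl1]
      · push_neg at hxa
        obtain ⟨t, ht, ht0, ht1⟩ : ∃ t : ℝ, t * a = x ∧ 0 ≤ t ∧ t ≤ 1 :=
          ⟨x / a, by field_simp, by positivity, by rw [div_le_one ha]; exact hxa.le⟩
        refine seg_dominated_mem_hull _ (a, b) ((0:ℝ), q) (hU _ hMV) (hU _ hBV) (x, y) t
          ht0 ht1 ?_ ?_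
        · simp only
          have : t * a + (1 - t) * 0 = x := by linear_combination ht
          linarith
        · simp only
          rw [← mul_le_mul_iff_of_pos_right ha]
          have key : (t * b + (1 - t) * q) * a = a * q - (q - b) * x := by
            linear_combination (b - q) * ht
          rw [key]; nlinarith [hl2]

lemma strip_meas (l r c m : ℝ) :
    MeasurableSet {z : ℝ × ℝ | z.1 ∈ Ico l r ∧ z.2 ∈ Ico 0 (c + m * z.1)} := by
  have h1 : MeasurableSet {z : ℝ × ℝ | z.1 ∈ Ico l r} :=
    measurable_fst measurableSet_Ico
  have h2 : MeasurableSet {z : ℝ × ℝ | 0 ≤ z.2} :=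
    measurableSet_le measurable_const measurable_snd
  have h3 : MeasurableSet {z : ℝ × ℝ | z.2 < c + m * z.1} :=
    measurableSet_lt measurable_snd (measurable_const.add (measurable_fst.const_mul m))
  have : {z : ℝ × ℝ | z.1 ∈ Ico l r ∧ z.2 ∈ Ico 0 (c + m * z.1)} =
      {z : ℝ × ℝ | z.1 ∈ Ico l r} ∩ ({z : ℝ × ℝ | 0 ≤ z.2} ∩ {z : ℝ × ℝ | z.2 < c + m * z.1}) := by
    ext z; simp [mem_Ico, and_assoc]
  rw [this]; exact h1.inter (h2.inter h3)

/-- Newton number of a polynomial whose Newton region is the triangle with legs `P`, `Q`. -/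
lemma nu_tri (f : MvPolynomial (Fin 2) ℂ) (P Q : ℝ) (hP : 0 < P) (hQ : 0 < Q)
    (hreg : newtonRegion f =
      {z : ℝ × ℝ | 0 ≤ z.1 ∧ 0 ≤ z.2 ∧ Q * z.1 + P * z.2 < P * Q}) :
    newtonNumber f = P * Q - P - Q + 1 := by
  have hQP : Q / P * P = Q := by field_simp
  have hset : newtonRegion f =
      {z : ℝ × ℝ | z.1 ∈ Ico 0 P ∧ z.2 ∈ Ico 0 (Q + (-(Q/P)) * z.1)} := by
    rw [hreg]; ext ⟨x, y⟩
    simp only [mem_setOf_eq, mem_Ico]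
    constructor
    · rintro ⟨hx, hy, hl⟩
      refine ⟨⟨hx, ?_⟩, hy, ?_⟩
      · nlinarith
      · rw [← mul_lt_mul_iff_of_pos_right hP]; nlinarith
    · rintro ⟨⟨hx, hxP⟩, hy, hyl⟩
      refine ⟨hx, hy, ?_⟩
      have := (mul_lt_mul_iff_of_pos_right hP).2 hyl
      nlinarith
  have hvol : volume (newtonRegion f) = ENNReal.ofReal (P * Q / 2) := by
    rw [hset, vol_strip 0 P Q (-(Q/P)) hP.le ?side]
    · congr 1; field_simp; ring
    · rintro x ⟨hx0, hxP⟩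
      have : Q / P * x ≤ Q / P * P := by
        apply mul_le_mul_of_nonneg_left hxP.le (by positivity)
      rw [hQP] at this; linarith
  have hsx : {x : ℝ | (x, (0:ℝ)) ∈ newtonRegion f} = Ico 0 P := by
    rw [hreg]; ext x
    simp only [mem_setOf_eq, mem_Ico]
    constructor
    · rintro ⟨hx, -, hl⟩; exact ⟨hx, by nlinarith⟩
    · rintro ⟨hx, hxP⟩; exact ⟨hx, le_rfl, by nlinarith⟩
  have hsy : {y : ℝ | ((0:ℝ), y) ∈ newtonRegion f} = Ico 0 Q := by
    rw [hreg]; ext y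
    simp only [mem_setOf_eq, mem_Ico]
    constructor
    · rintro ⟨-, hy, hl⟩; exact ⟨hy, by nlinarith⟩
    · rintro ⟨hy, hyQ⟩; exact ⟨le_rfl, hy, by nlinarith⟩
  rw [newtonNumber, hvol, hsx, hsy, Real.volume_Ico, Real.volume_Ico,
    ENNReal.toReal_ofReal (by positivity), ENNReal.toReal_ofReal (by linarith),
    ENNReal.toReal_ofReal (by linarith)]
  ring

lemma nu_mid (f : MvPolynomial (Fin 2) ℂ) (p q a b : ℝ)
    (ha : 0 < a) (hap : a < p) (hb : 0 < b) (hbq : b < q) (hs : q * a + p * b < p * q)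
    (hreg : newtonRegion f = {z : ℝ × ℝ | 0 ≤ z.1 ∧ 0 ≤ z.2 ∧
      (b * z.1 + (p - a) * z.2 < b * p ∨ (q - b) * z.1 + a * z.2 < a * q)}) :
    newtonNumber f = q * a + p * b - p - q + 1 := by
  have hpa : (0:ℝ) < p - a := by linarith
  have hqb : (0:ℝ) < q - b := by linarith
  have hf2 : ∀ x y : ℝ, (y < q + -((q - b)/a) * x ↔ (q - b) * x + a * y < a * q) := by
    intro x y
    have key : (q + -((q - b)/a) * x) * a = q * a - (q - b) * x := by field_simp; ring
    constructor <;> intro h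
    · have h2 := (mul_lt_mul_iff_of_pos_right ha).2 h
      rw [key] at h2; linarith
    · rw [← mul_lt_mul_iff_of_pos_right ha, key]; linarith
  have hf1 : ∀ x y : ℝ, (y < b * p / (p - a) + -(b/(p - a)) * x ↔
      b * x + (p - a) * y < b * p) := by
    intro x y
    have key : (b * p / (p - a) + -(b/(p - a)) * x) * (p - a) = b * p - b * x := by
      field_simp; ring
    constructor <;> intro h
    · have h2 := (mul_lt_mul_iff_of_pos_right hpa).2 h
      rw [key] at h2; linarith
    · rw [← mul_lt_mul_iff_of_pos_right hpa, key]; linarith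
  set S1 : Set (ℝ × ℝ) :=
    {z : ℝ × ℝ | z.1 ∈ Ico 0 a ∧ z.2 ∈ Ico 0 (q + -((q - b)/a) * z.1)} with hS1
  set S2 : Set (ℝ × ℝ) :=
    {z : ℝ × ℝ | z.1 ∈ Ico a p ∧ z.2 ∈ Ico 0 (b * p / (p - a) + -(b/(p - a)) * z.1)} with hS2
  have hsplit : newtonRegion f = S1 ∪ S2 := by
    rw [hreg]; ext ⟨x, y⟩
    simp only [hS1, hS2, mem_setOf_eq, mem_union, mem_Ico]
    constructor
    · rintro ⟨hx, hy, hl⟩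
      by_cases hxa : x < a
      · left
        refine ⟨⟨hx, hxa⟩, hy, (hf2 x y).2 ?_⟩
        rcases hl with h | h
        · nlinarith [mul_nonneg (sub_nonneg.2 hxa.le) (sub_nonneg.2 hs.le)]
        · exact h
      · push_neg at hxa
        right
        have hbl : b * x + (p - a) * y < b * p := by
          rcases hl with h | h
          · exact h
          · nlinarith [mul_nonneg (sub_nonneg.2 hxa) (sub_nonneg.2 hs.le)]
        refine ⟨⟨hxa, ?_⟩, hy, (hf1 x y).2 hbl⟩
        nlinarith
    · rintro (⟨⟨hx, hxa⟩, hy, hyf⟩ | ⟨⟨hxa, hxp⟩, hy, hyf⟩)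
      · exact ⟨hx, hy, Or.inr ((hf2 x y).1 hyf)⟩
      · exact ⟨by linarith, hy, Or.inl ((hf1 x y).1 hyf)⟩
  have hdisj : Disjoint S1 S2 := by
    rw [Set.disjoint_left]
    rintro ⟨x, y⟩ ⟨⟨hx, hxa⟩, -⟩ ⟨⟨hxa', -⟩, -⟩
    exact absurd hxa (not_lt.2 hxa')
  have hv1 : volume S1 = ENNReal.ofReal (a * (q + b) / 2) := by
    rw [hS1, vol_strip 0 a q (-((q - b)/a)) ha.le ?s1]
    · congr 1; field_simp; ring
    · rintro x ⟨hx0, hxa⟩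
      rw [← sub_nonneg]
      have : (q - b)/a * x ≤ (q - b)/a * a := by
        apply mul_le_mul_of_nonneg_left hxa.le (by positivity)
      rw [mul_comm ((q-b)/a) a, mul_div_cancel₀ (q - b) ha.ne'] at this
      nlinarith
  have hv2 : volume S2 = ENNReal.ofReal (b * (p - a) / 2) := by
    rw [hS2, vol_strip a p (b * p / (p - a)) (-(b/(p - a))) hap.le ?s2]
    · congr 1; field_simp; ring
    · rintro x ⟨hxa, hxp⟩
      rw [← sub_nonneg]
      have h1 : b / (p - a) * x ≤ b / (p - a) * p := by
        apply mul_le_mul_of_nonneg_left hxp.le (by positivity)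
      have h2 : b * p / (p - a) - b / (p - a) * p = 0 := by field_simp; ring
      linarith
  have hvol : volume (newtonRegion f) = ENNReal.ofReal ((q * a + p * b) / 2) := by
    rw [hsplit, measure_union hdisj (strip_meas a p (b * p / (p - a)) (-(b/(p - a)))), hv1, hv2,
      ← ENNReal.ofReal_add
        (by nlinarith [mul_pos ha (by linarith : (0:ℝ) < q + b)])
        (by nlinarith [mul_pos hb hpa])]
    congr 1; ring
  have hsx : {x : ℝ | (x, (0:ℝ)) ∈ newtonRegion f} = Ico 0 p := by
    rw [hreg]; ext x
    simp only [mem_setOf_eq, mem_Ico]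
    constructor
    · rintro ⟨hx, -, hl | hl⟩
      · exact ⟨hx, by nlinarith⟩
      · refine ⟨hx, ?_⟩; nlinarith
    · rintro ⟨hx, hxp⟩
      exact ⟨hx, le_rfl, Or.inl (by nlinarith)⟩
  have hsy : {y : ℝ | ((0:ℝ), y) ∈ newtonRegion f} = Ico 0 q := by
    rw [hreg]; ext y
    simp only [mem_setOf_eq, mem_Ico]
    constructor
    · rintro ⟨-, hy, hl | hl⟩
      · refine ⟨hy, ?_⟩; nlinarith
      · exact ⟨hy, by nlinarith⟩
    · rintro ⟨hy, hyq⟩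
      exact ⟨le_rfl, hy, Or.inr (by nlinarith)⟩
  rw [newtonNumber, hvol, hsx, hsy, Real.volume_Ico, Real.volume_Ico,
    ENNReal.toReal_ofReal
      (by nlinarith [mul_pos (hb.trans hbq) ha, mul_pos (ha.trans hap) hb]),
    ENNReal.toReal_ofReal (by linarith), ENNReal.toReal_ofReal (by linarith)]
  ring

lemma fin2_apply_single0 (p : ℕ) (j : Fin 2) :
    (Finsupp.single (0 : Fin 2) p) j = if j = 0 then p else 0 := by
  rw [Finsupp.single_apply]; congr 1; simp [eq_comm]

lemma supp_f (p q : ℕ) (hp : 0 < p) (hq : 0 < q) :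
    ((X 0) ^ p - (X 1) ^ q : MvPolynomial (Fin 2) ℂ).support =
      {Finsupp.single 0 p, Finsupp.single 1 q} := by
  have hne : (Finsupp.single 0 p : Fin 2 →₀ ℕ) ≠ Finsupp.single 1 q := by
    intro h
    have := DFunLike.congr_fun h 0
    simp [Finsupp.single_apply] at this
    omega
  ext m
  simp only [MvPolynomial.mem_support_iff, MvPolynomial.coeff_sub, X_pow_eq_monomial,
    coeff_monomial, Finset.mem_insert, Finset.mem_singleton]
  by_cases h1 : (Finsupp.single 0 p : Fin 2 →₀ ℕ) = m <;>
    by_cases h2 : (Finsupp.single 1 q : Fin 2 →₀ ℕ) = m <;>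
    first
      | (exact absurd (h1.trans h2.symm) hne)
      | simp [h1, h2] <;> tauto
lemma supp_g (p q a b : ℕ) (hp : 0 < p) (hq : 0 < q)
    (hne1 : (Finsupp.single (0:Fin 2) a + Finsupp.single (1:Fin 2) b) ≠ Finsupp.single 0 p)
    (hne2 : (Finsupp.single (0:Fin 2) a + Finsupp.single (1:Fin 2) b) ≠ Finsupp.single 1 q) :
    ((X 0) ^ p - (X 1) ^ q + (X 0) ^ a * (X 1) ^ b : MvPolynomial (Fin 2) ℂ).support =
      {Finsupp.single 0 p, Finsupp.single 1 q,
        Finsupp.single 0 a + Finsupp.single 1 b} := by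
  have hne : (Finsupp.single 0 p : Fin 2 →₀ ℕ) ≠ Finsupp.single 1 q := by
    intro h
    have := DFunLike.congr_fun h 0
    simp [Finsupp.single_apply] at this
    omega
  have hX : ((X 0) ^ a * (X 1) ^ b : MvPolynomial (Fin 2) ℂ) =
      monomial (Finsupp.single 0 a + Finsupp.single 1 b) 1 := by
    rw [X_pow_eq_monomial, X_pow_eq_monomial, monomial_mul, one_mul]
  ext m
  simp only [MvPolynomial.mem_support_iff, MvPolynomial.coeff_add, MvPolynomial.coeff_sub,
    X_pow_eq_monomial, hX, coeff_monomial, Finset.mem_insert, Finset.mem_singleton]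
  by_cases h1 : (Finsupp.single 0 p : Fin 2 →₀ ℕ) = m <;>
    by_cases h2 : (Finsupp.single 1 q : Fin 2 →₀ ℕ) = m <;>
    by_cases h3 : (Finsupp.single 0 a + Finsupp.single 1 b : Fin 2 →₀ ℕ) = m
  · exact absurd (h1.trans h2.symm) hne
  · exact absurd (h1.trans h2.symm) hne
  · exact absurd (h3.trans h1.symm) hne1
  · simp [h1, h2, h3]
  · exact absurd (h3.trans h2.symm) hne2
  · simp [h1, h2, h3]
  · simp [h1, h2, h3]
  · simp [h1, h2, h3]; tauto

lemma gamma_f_eq (p q : ℕ) (hp : 0 < p) (hq : 0 < q) :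
    gammaPlus (X 0 ^ p - X 1 ^ q : MvPolynomial (Fin 2) ℂ) =
      convexHull ℝ (⋃ v ∈ ({((p:ℝ), (0:ℝ)), ((0:ℝ), (q:ℝ))} : Set (ℝ × ℝ)), quad v) := by
  unfold gammaPlus
  congr 1
  rw [supp_f p q hp hq]
  ext z
  simp only [Finset.mem_filter, Finset.mem_insert, Finset.mem_singleton, Set.mem_iUnion,
    Set.mem_setOf_eq, quad, Set.mem_insert_iff, Set.mem_singleton_iff, exists_prop]
  constructor
  · rintro ⟨m, ⟨hm | hm, -⟩, hz⟩ <;> subst hm <;>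
      [exact ⟨_, Or.inl rfl, by simpa [Finsupp.single_apply] using hz⟩;
       exact ⟨_, Or.inr rfl, by simpa [Finsupp.single_apply] using hz⟩]
  · rintro ⟨v, hv | hv, hz⟩ <;> subst hv
    · exact ⟨Finsupp.single 0 p, ⟨Or.inl rfl, fun h => hp.ne' (Finsupp.single_eq_zero.1 h)⟩,
        by simpa [Finsupp.single_apply] using hz⟩
    · exact ⟨Finsupp.single 1 q, ⟨Or.inr rfl, fun h => hq.ne' (Finsupp.single_eq_zero.1 h)⟩,
        by simpa [Finsupp.single_apply] using hz⟩

lemma gamma_g_eq (p q a b : ℕ) (hp : 0 < p) (hq : 0 < q) (hab : ¬(a = 0 ∧ b = 0))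
    (hne1 : (Finsupp.single (0:Fin 2) a + Finsupp.single (1:Fin 2) b) ≠ Finsupp.single 0 p)
    (hne2 : (Finsupp.single (0:Fin 2) a + Finsupp.single (1:Fin 2) b) ≠ Finsupp.single 1 q) :
    gammaPlus (X 0 ^ p - X 1 ^ q + X 0 ^ a * X 1 ^ b : MvPolynomial (Fin 2) ℂ) =
      convexHull ℝ (⋃ v ∈ ({((p:ℝ), (0:ℝ)), ((0:ℝ), (q:ℝ)), ((a:ℝ), (b:ℝ))} : Set (ℝ × ℝ)),
        quad v) := by
  have habne : (Finsupp.single (0:Fin 2) a + Finsupp.single (1:Fin 2) b) ≠ 0 := by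
    intro h
    have h0 := DFunLike.congr_fun h 0
    have h1 := DFunLike.congr_fun h 1
    simp [Finsupp.single_apply] at h0 h1
    exact hab ⟨h0, h1⟩
  unfold gammaPlus
  congr 1
  rw [supp_g p q a b hp hq hne1 hne2]
  ext z
  simp only [Finset.mem_filter, Finset.mem_insert, Finset.mem_singleton, Set.mem_iUnion,
    Set.mem_setOf_eq, quad, Set.mem_insert_iff, Set.mem_singleton_iff, exists_prop]
  constructor
  · rintro ⟨m, ⟨hm | hm | hm, -⟩, hz⟩ <;> subst hm
    · exact ⟨_, Or.inl rfl, by simpa [Finsupp.single_apply] using hz⟩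
    · exact ⟨_, Or.inr (Or.inl rfl), by simpa [Finsupp.single_apply] using hz⟩
    · exact ⟨_, Or.inr (Or.inr rfl), by simpa [Finsupp.single_apply] using hz⟩
  · rintro ⟨v, hv | hv | hv, hz⟩ <;> subst hv
    · exact ⟨Finsupp.single 0 p, ⟨Or.inl rfl, fun h => hp.ne' (Finsupp.single_eq_zero.1 h)⟩,
        by simpa [Finsupp.single_apply] using hz⟩
    · exact ⟨Finsupp.single 1 q,
        ⟨Or.inr (Or.inl rfl), fun h => hq.ne' (Finsupp.single_eq_zero.1 h)⟩,
        by simpa [Finsupp.single_apply] using hz⟩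
    · exact ⟨Finsupp.single 0 a + Finsupp.single 1 b, ⟨Or.inr (Or.inr rfl), habne⟩,
        by simpa [Finsupp.single_apply] using hz⟩

lemma gamma_g0_eq (p q : ℕ) (hp : 0 < p) (hq : 0 < q) :
    gammaPlus (X 0 ^ p - X 1 ^ q + X 0 ^ 0 * X 1 ^ 0 : MvPolynomial (Fin 2) ℂ) =
      gammaPlus (X 0 ^ p - X 1 ^ q : MvPolynomial (Fin 2) ℂ) := by
  have hne1 : (Finsupp.single (0:Fin 2) 0 + Finsupp.single (1:Fin 2) 0) ≠
      Finsupp.single 0 p := by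
    intro h
    have := DFunLike.congr_fun h 0
    simp [Finsupp.single_apply] at this
    omega
  have hne2 : (Finsupp.single (0:Fin 2) 0 + Finsupp.single (1:Fin 2) 0) ≠
      Finsupp.single 1 q := by
    intro h
    have := DFunLike.congr_fun h 1
    simp [Finsupp.single_apply] at this
    omega
  unfold gammaPlus
  congr 1
  rw [supp_g p q 0 0 hp hq hne1 hne2, supp_f p q hp hq]
  ext z
  simp only [Finset.mem_filter, Finset.mem_insert, Finset.mem_singleton, Set.mem_iUnion,
    Set.mem_setOf_eq, exists_prop]
  constructor
  · rintro ⟨m, ⟨hm | hm | hm, hm0⟩, hz⟩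
    · exact ⟨m, ⟨Or.inl hm, hm0⟩, hz⟩
    · exact ⟨m, ⟨Or.inr hm, hm0⟩, hz⟩
    · exact absurd hm (by simp_all)
  · rintro ⟨m, ⟨hm, hm0⟩, hz⟩
    exact ⟨m, ⟨by tauto, hm0⟩, hz⟩
lemma exists_ab (p q : ℕ) (hq : 2 ≤ q) (hpq : q ≤ p) (hd : p.gcd q < q) :
    ∃ a b : ℕ, 1 ≤ a ∧ 1 ≤ b ∧ q * a + p * b + p.gcd q = p * q := by
  set d := p.gcd q with hdd
  have hq0 : 0 < q := by omega
  have hp0 : 0 < p := by omega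
  have hd0 : 0 < d := Nat.gcd_pos_of_pos_left q hp0
  obtain ⟨p', hp'⟩ : d ∣ p := Nat.gcd_dvd_left p q
  obtain ⟨q', hq'⟩ : d ∣ q := Nat.gcd_dvd_right p q
  have hq'0 : 0 < q' := Nat.pos_of_ne_zero (by intro h; rw [h, Nat.mul_zero] at hq'; omega)
  have hp'0 : 0 < p' := Nat.pos_of_ne_zero (by intro h; rw [h, Nat.mul_zero] at hp'; omega)
  have hdq : d < q := hd
  have hq'2 : 2 ≤ q' := by
    by_contra h
    push_neg at h
    have h1 : q' = 1 := by omega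
    rw [h1, Nat.mul_one] at hq'
    omega
  have hp'q' : q' ≤ p' := by
    by_contra h
    push_neg at h
    have : p < q := by
      calc p = d * p' := hp'
        _ < d * q' := (Nat.mul_lt_mul_left hd0).2 h
        _ = q := hq'.symm
    omega
  have hcop : Nat.Coprime p' q' := by
    have hg : d * Nat.gcd p' q' = d * 1 := by
      rw [← Nat.gcd_mul_left, ← hp', ← hq', Nat.mul_one]
    exact Nat.eq_of_mul_eq_mul_left hd0 hg
  haveI : NeZero q' := ⟨hq'0.ne'⟩
  haveI : Fact (1 < q') := ⟨hq'2⟩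
  set u : ZMod q' := (-1) * (p' : ZMod q')⁻¹ with hu
  set b := u.val with hb
  have hbu : ((b : ℕ) : ZMod q') = u := by
    rw [hb]; simp [ZMod.natCast_val, ZMod.cast_id]
  have hmul : ((p' : ZMod q') * b : ZMod q') = -1 := by
    rw [hbu, hu, ← mul_assoc, mul_comm (p' : ZMod q') (-1), mul_assoc,
      ZMod.mul_inv_eq_gcd]
    have hval : ((p' : ZMod q')).val.gcd q' = 1 := by
      rw [ZMod.val_natCast, ← Nat.gcd_rec, Nat.gcd_comm]
      exact hcop
    rw [hval]; simp
  have hblt : b < q' := ZMod.val_lt u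
  have hbne : b ≠ 0 := by
    intro h
    rw [h] at hmul
    simp only [Nat.cast_zero, mul_zero] at hmul
    have h1 : (1 : ZMod q') = 0 := by
      have := hmul.symm
      rw [neg_eq_zero] at this
      · exact this.symm ▸ rfl
    exact one_ne_zero h1
  have hb1 : 1 ≤ b := Nat.one_le_iff_ne_zero.2 hbne
  -- key bound: p' * b + 1 + q' ≤ d * p' * q'
  have hbound : p' * b + 1 + q' ≤ d * p' * q' := by
    have hbq' : b ≤ q' - 1 := by omega
    rcases Nat.lt_or_ge d 2 with hd1 | hd2
    · -- d = 1, so p' = p > q = q'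
      have hd1' : d = 1 := by omega
      have hpq' : q' < p' := by
        rcases Nat.lt_or_ge q' p' with h | h
        · exact h
        · have : p' = q' := le_antisymm h hp'q'
          rw [hd1'] at hp' hq'
          simp at hp' hq'
          rw [hp', hq', this] at hdd
          rw [Nat.gcd_self] at hdd
          omega
      have h1 : p' * (q' - b) ≥ p' := Nat.le_mul_of_pos_right p' (by omega)
      have h2 : p' * b + p' * (q' - b) = p' * q' := by
        rw [← Nat.mul_add, Nat.add_sub_cancel' (show b ≤ q' by omega)]
      rw [hd1', Nat.one_mul]
      linarith
    · -- d ≥ 2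
      have h1 : p' * (d * q' - b) ≥ d * q' - b := Nat.le_mul_of_pos_left _ hp'0
      have h2 : d * q' - b ≥ q' + 1 :=
        Nat.le_sub_of_add_le (by nlinarith)
      have h3 : p' * b + p' * (d * q' - b) = d * p' * q' := by
        rw [← Nat.mul_add, Nat.add_sub_cancel' (by nlinarith : b ≤ d * q')]
        ring
      linarith
  set N := d * p' * q' - (1 + p' * b) with hN
  have hNeq : N + (1 + p' * b) = d * p' * q' := Nat.sub_add_cancel (by omega)
  have hdvd : q' ∣ N := by
    have hcast : ((N : ℕ) : ZMod q') = 0 := by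
      have h1 : ((N : ℕ) : ZMod q') + ((1 + p' * b : ℕ) : ZMod q') =
          ((d * p' * q' : ℕ) : ZMod q') := by
        rw [← Nat.cast_add, hNeq]
      have h2 : ((d * p' * q' : ℕ) : ZMod q') = 0 := by
        push_cast
        simp [ZMod.natCast_self]
      have h3 : ((1 + p' * b : ℕ) : ZMod q') = 0 := by
        push_cast
        rw [hmul]
        ring
      rw [h2, h3] at h1
      simpa using h1
    exact (ZMod.natCast_eq_zero_iff N q').1 hcast
  obtain ⟨a, ha⟩ := hdvd
  have ha1 : 1 ≤ a := by
    rcases Nat.eq_zero_or_pos a with h | h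
    · rw [h, Nat.mul_zero] at ha; omega
    · exact h
  refine ⟨a, b, ha1, hb1, ?_⟩
  have key : q' * a + (1 + p' * b) = d * p' * q' := by rw [← ha]; exact hNeq
  calc q * a + p * b + d = d * (q' * a + (1 + p' * b)) := by rw [hp', hq']; ring
    _ = d * (d * p' * q') := by rw [key]
    _ = p * q := by rw [hp', hq']; ring

lemma region_f (p q : ℕ) (hp : 0 < p) (hq : 0 < q) :
    newtonRegion (X 0 ^ p - X 1 ^ q : MvPolynomial (Fin 2) ℂ) =
      {z : ℝ × ℝ | 0 ≤ z.1 ∧ 0 ≤ z.2 ∧ (q:ℝ) * z.1 + (p:ℝ) * z.2 < (p:ℝ) * (q:ℝ)} := by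
  have hpr : (0:ℝ) < p := by exact_mod_cast hp
  have hqr : (0:ℝ) < q := by exact_mod_cast hq
  have hH := hull_two (p:ℝ) (q:ℝ) hpr hqr
    ({((p:ℝ), (0:ℝ)), ((0:ℝ), (q:ℝ))} : Set (ℝ × ℝ))
    (Or.inl rfl) (Or.inr rfl) ?hV
  case hV =>
    rintro v (rfl | rfl)
    · exact ⟨hpr.le, le_rfl, le_of_eq (by ring)⟩
    · exact ⟨le_rfl, hqr.le, le_of_eq (by ring)⟩
  rw [newtonRegion, gamma_f_eq p q hp hq, hH]
  ext ⟨x, y⟩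
  simp only [mem_diff, mem_setOf_eq]
  constructor
  · rintro ⟨⟨hx, hy⟩, hn⟩
    exact ⟨hx, hy, lt_of_not_ge fun hle => hn ⟨hx, hy, hle⟩⟩
  · rintro ⟨hx, hy, hlt⟩
    exact ⟨⟨hx, hy⟩, fun hmem => absurd hmem.2.2 (not_le.2 hlt)⟩

lemma region_gB (p q b : ℕ) (hp : 0 < p) (hq : 0 < q) (hb : 0 < b) (hbq : b < q) :
    newtonRegion (X 0 ^ p - X 1 ^ q + X 0 ^ 0 * X 1 ^ b : MvPolynomial (Fin 2) ℂ) =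
      {z : ℝ × ℝ | 0 ≤ z.1 ∧ 0 ≤ z.2 ∧ (b:ℝ) * z.1 + (p:ℝ) * z.2 < (p:ℝ) * (b:ℝ)} := by
  have hpr : (0:ℝ) < p := by exact_mod_cast hp
  have hqr : (0:ℝ) < q := by exact_mod_cast hq
  have hbr : (0:ℝ) < b := by exact_mod_cast hb
  have hbqr : (b:ℝ) ≤ q := by exact_mod_cast hbq.le
  have hne1 : (Finsupp.single (0:Fin 2) 0 + Finsupp.single (1:Fin 2) b) ≠
      Finsupp.single 0 p := by
    intro h
    have := DFunLike.congr_fun h 0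
    simp [Finsupp.single_apply] at this
    omega
  have hne2 : (Finsupp.single (0:Fin 2) 0 + Finsupp.single (1:Fin 2) b) ≠
      Finsupp.single 1 q := by
    intro h
    have := DFunLike.congr_fun h 1
    simp [Finsupp.single_apply] at this
    omega
  have hH := hull_two (p:ℝ) (b:ℝ) hpr hbr
    ({((p:ℝ), (0:ℝ)), ((0:ℝ), (q:ℝ)), (((0:ℕ):ℝ), ((b:ℕ):ℝ))} : Set (ℝ × ℝ))
    (Or.inl rfl) (Or.inr (Or.inr (by norm_num))) ?hV
  case hV =>
    rintro v (rfl | rfl | rfl)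
    · exact ⟨hpr.le, le_rfl, le_of_eq (by ring)⟩
    · refine ⟨le_rfl, hqr.le, ?_⟩
      simp only
      nlinarith
    · refine ⟨by norm_num, by positivity, le_of_eq (by push_cast; ring)⟩
  rw [newtonRegion, gamma_g_eq p q 0 b hp hq (by omega) hne1 hne2, hH]
  ext ⟨x, y⟩
  simp only [mem_diff, mem_setOf_eq]
  constructor
  · rintro ⟨⟨hx, hy⟩, hn⟩
    exact ⟨hx, hy, lt_of_not_ge fun hle => hn ⟨hx, hy, hle⟩⟩
  · rintro ⟨hx, hy, hlt⟩
    exact ⟨⟨hx, hy⟩, fun hmem => absurd hmem.2.2 (not_le.2 hlt)⟩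

lemma region_gC (p q a : ℕ) (hp : 0 < p) (hq : 0 < q) (ha : 0 < a) (hap : a < p) :
    newtonRegion (X 0 ^ p - X 1 ^ q + X 0 ^ a * X 1 ^ 0 : MvPolynomial (Fin 2) ℂ) =
      {z : ℝ × ℝ | 0 ≤ z.1 ∧ 0 ≤ z.2 ∧ (q:ℝ) * z.1 + (a:ℝ) * z.2 < (a:ℝ) * (q:ℝ)} := by
  have hpr : (0:ℝ) < p := by exact_mod_cast hp
  have hqr : (0:ℝ) < q := by exact_mod_cast hq
  have har : (0:ℝ) < a := by exact_mod_cast ha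
  have hapr : (a:ℝ) ≤ p := by exact_mod_cast hap.le
  have hne1 : (Finsupp.single (0:Fin 2) a + Finsupp.single (1:Fin 2) 0) ≠
      Finsupp.single 0 p := by
    intro h
    have := DFunLike.congr_fun h 0
    simp [Finsupp.single_apply] at this
    omega
  have hne2 : (Finsupp.single (0:Fin 2) a + Finsupp.single (1:Fin 2) 0) ≠
      Finsupp.single 1 q := by
    intro h
    have := DFunLike.congr_fun h 1
    simp [Finsupp.single_apply] at this
    omega
  have hH := hull_two (a:ℝ) (q:ℝ) har hqr
    ({((p:ℝ), (0:ℝ)), ((0:ℝ), (q:ℝ)), (((a:ℕ):ℝ), ((0:ℕ):ℝ))} : Set (ℝ × ℝ))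
    (Or.inr (Or.inr (by norm_num))) (Or.inr (Or.inl rfl)) ?hV
  case hV =>
    rintro v (rfl | rfl | rfl)
    · refine ⟨hpr.le, le_rfl, ?_⟩
      simp only
      nlinarith
    · exact ⟨le_rfl, hqr.le, le_of_eq (by ring)⟩
    · refine ⟨by positivity, by norm_num, le_of_eq (by push_cast; ring)⟩
  rw [newtonRegion, gamma_g_eq p q a 0 hp hq (by omega) hne1 hne2, hH]
  ext ⟨x, y⟩
  simp only [mem_diff, mem_setOf_eq]
  constructor
  · rintro ⟨⟨hx, hy⟩, hn⟩
    exact ⟨hx, hy, lt_of_not_ge fun hle => hn ⟨hx, hy, hle⟩⟩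
  · rintro ⟨hx, hy, hlt⟩
    exact ⟨⟨hx, hy⟩, fun hmem => absurd hmem.2.2 (not_le.2 hlt)⟩

lemma region_gA (p q a b : ℕ) (hp : 0 < p) (hq : 0 < q) (ha : 0 < a) (hap : a < p)
    (hb : 0 < b) (hbq : b < q) (hs : q * a + p * b < p * q) :
    newtonRegion (X 0 ^ p - X 1 ^ q + X 0 ^ a * X 1 ^ b : MvPolynomial (Fin 2) ℂ) =
      {z : ℝ × ℝ | 0 ≤ z.1 ∧ 0 ≤ z.2 ∧
        ((b:ℝ) * z.1 + ((p:ℝ) - (a:ℝ)) * z.2 < (b:ℝ) * (p:ℝ) ∨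
         ((q:ℝ) - (b:ℝ)) * z.1 + (a:ℝ) * z.2 < (a:ℝ) * (q:ℝ))} := by
  have hpr : (0:ℝ) < p := by exact_mod_cast hp
  have hqr : (0:ℝ) < q := by exact_mod_cast hq
  have har : (0:ℝ) < a := by exact_mod_cast ha
  have hbr : (0:ℝ) < b := by exact_mod_cast hb
  have hapr : (a:ℝ) < p := by exact_mod_cast hap
  have hbqr : (b:ℝ) < q := by exact_mod_cast hbq
  have hsr : (q:ℝ) * a + (p:ℝ) * b < (p:ℝ) * q := by exact_mod_cast hs
  have hne1 : (Finsupp.single (0:Fin 2) a + Finsupp.single (1:Fin 2) b) ≠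
      Finsupp.single 0 p := by
    intro h
    have := DFunLike.congr_fun h 1
    simp [Finsupp.single_apply] at this
    omega
  have hne2 : (Finsupp.single (0:Fin 2) a + Finsupp.single (1:Fin 2) b) ≠
      Finsupp.single 1 q := by
    intro h
    have := DFunLike.congr_fun h 0
    simp [Finsupp.single_apply] at this
    omega
  have hH := hull_three (p:ℝ) (q:ℝ) (a:ℝ) (b:ℝ) har hapr hbr hbqr hsr
    ({((p:ℝ), (0:ℝ)), ((0:ℝ), (q:ℝ)), (((a:ℕ):ℝ), ((b:ℕ):ℝ))} : Set (ℝ × ℝ))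
    (Or.inl rfl) (Or.inr (Or.inl rfl)) (Or.inr (Or.inr rfl)) ?hV
  case hV =>
    rintro v (rfl | rfl | rfl)
    · refine ⟨hpr.le, le_rfl, le_of_eq (by ring), ?_⟩
      simp only
      nlinarith
    · refine ⟨le_rfl, hqr.le, ?_, le_of_eq (by ring)⟩
      simp only
      nlinarith
    · exact ⟨by positivity, by positivity, le_of_eq (by push_cast; ring),
        le_of_eq (by push_cast; ring)⟩
  rw [newtonRegion, gamma_g_eq p q a b hp hq (by omega) hne1 hne2, hH]
  ext ⟨x, y⟩
  simp only [mem_diff, mem_setOf_eq]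
  constructor
  · rintro ⟨⟨hx, hy⟩, hn⟩
    refine ⟨hx, hy, ?_⟩
    by_contra hcon
    push_neg at hcon
    exact hn ⟨hx, hy, hcon.1, hcon.2⟩
  · rintro ⟨hx, hy, hlt | hlt⟩
    · exact ⟨⟨hx, hy⟩, fun hmem => absurd hmem.2.2.1 (not_le.2 hlt)⟩
    · exact ⟨⟨hx, hy⟩, fun hmem => absurd hmem.2.2.2 (not_le.2 hlt)⟩

lemma nu_g0 (p q : ℕ) (hp : 0 < p) (hq : 0 < q) :
    newtonNumber (X 0 ^ p - X 1 ^ q + X 0 ^ 0 * X 1 ^ 0 : MvPolynomial (Fin 2) ℂ) =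
      newtonNumber (X 0 ^ p - X 1 ^ q : MvPolynomial (Fin 2) ℂ) := by
  unfold newtonNumber newtonRegion
  rw [gamma_g0_eq p q hp hq]

end NondegJump

open NondegJump in
/-- For `p ≥ q ≥ 2` with `d = gcd(p,q) < q`, the minimum nonzero value of
`ν(x^p - y^q) - ν(x^p - y^q + x^a y^b)` over monomials `x^a y^b` with `(a,b) ∈ ℕ²`
strictly below the segment from `(p,0)` to `(0,q)` equals `d`. -/
theorem nondeg_jump_eq_gcd (p q : ℕ) (hq : 2 ≤ q) (hpq : q ≤ p)
    (hd : Nat.gcd p q < q) :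
    IsLeast {m : ℝ | 0 < m ∧ ∃ a b : ℕ, q * a + p * b < p * q ∧
        m = newtonNumber ((X 0) ^ p - (X 1) ^ q)
              - newtonNumber ((X 0) ^ p - (X 1) ^ q + (X 0) ^ a * (X 1) ^ b)}
      (Nat.gcd p q : ℝ) := by
  have hq0 : 0 < q := by omega
  have hp0 : 0 < p := by omega
  have hp2 : 2 ≤ p := le_trans hq hpq
  have hpr : (0:ℝ) < p := by exact_mod_cast hp0
  have hqr : (0:ℝ) < q := by exact_mod_cast hq0
  have hd1 : 1 ≤ Nat.gcd p q := Nat.gcd_pos_of_pos_left q hp0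
  have hνf : newtonNumber ((X 0) ^ p - (X 1) ^ q : MvPolynomial (Fin 2) ℂ) =
      (p:ℝ) * q - p - q + 1 := nu_tri _ (p:ℝ) (q:ℝ) hpr hqr (region_f p q hp0 hq0)
  constructor
  · -- membership
    obtain ⟨a, b, ha1, hb1, habd⟩ := exists_ab p q hq hpq hd
    have hpb : p * 1 ≤ p * b := Nat.mul_le_mul_left p hb1
    have hqa : q * 1 ≤ q * a := Nat.mul_le_mul_left q ha1
    have hconstr : q * a + p * b < p * q := by linarith
    have hap : a < p := by
      have h1 : q * a < p * q := by linarith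
      rw [Nat.mul_comm p q] at h1
      exact Nat.lt_of_mul_lt_mul_left h1
    have hbq : b < q := by
      have h1 : p * b < p * q := by linarith
      exact Nat.lt_of_mul_lt_mul_left h1
    have hνg := nu_mid _ (p:ℝ) (q:ℝ) (a:ℝ) (b:ℝ)
      (by exact_mod_cast ha1) (by exact_mod_cast hap) (by exact_mod_cast hb1)
      (by exact_mod_cast hbq) (by exact_mod_cast hconstr)
      (region_gA p q a b hp0 hq0 ha1 hap hb1 hbq hconstr)
    refine ⟨by exact_mod_cast hd1, a, b, hconstr, ?_⟩
    rw [hνf, hνg]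
    have habd' : (q:ℝ) * a + (p:ℝ) * b + (Nat.gcd p q : ℝ) = (p:ℝ) * q := by
      exact_mod_cast habd
    linarith
  · -- lower bound
    rintro m ⟨hm, a, b, hconstr, hmeq⟩
    rcases Nat.eq_zero_or_pos a with ha0 | ha1 <;> rcases Nat.eq_zero_or_pos b with hb0 | hb1
    · -- a = 0, b = 0 : jump is zero, contradiction
      subst ha0; subst hb0
      rw [nu_g0 p q hp0 hq0] at hmeq
      rw [hmeq] at hm
      linarith
    · -- a = 0, b ≥ 1
      subst ha0
      have hbq : b < q := by
        have h1 : p * b < p * q := by simpa using hconstr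
        exact Nat.lt_of_mul_lt_mul_left h1
      have hνg := nu_tri _ (p:ℝ) (b:ℝ) hpr (by exact_mod_cast hb1)
        (region_gB p q b hp0 hq0 hb1 hbq)
      rw [hmeq, hνf, hνg]
      have h1 : p - 1 ≤ (p - 1) * (q - b) := Nat.le_mul_of_pos_right _ (by omega)
      have h2 : Nat.gcd p q ≤ (p - 1) * (q - b) := le_trans (by omega) h1
      have h3 : (Nat.gcd p q : ℝ) ≤ ((p:ℝ) - 1) * ((q:ℝ) - b) := by
        have hc : ((((p-1)*(q-b)) : ℕ) : ℝ) = ((p:ℝ) - 1) * ((q:ℝ) - (b:ℝ)) := by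
          push_cast [Nat.cast_sub (by omega : 1 ≤ p), Nat.cast_sub hbq.le]
          ring
        calc (Nat.gcd p q : ℝ) ≤ (((p-1)*(q-b) : ℕ) : ℝ) := by exact_mod_cast h2
          _ = _ := hc
      nlinarith [h3]
    · -- b = 0, a ≥ 1
      subst hb0
      have hap : a < p := by
        have h1 : q * a < q * p := by
          have := hconstr
          simp only [Nat.mul_zero, Nat.add_zero] at this
          rw [Nat.mul_comm q p]
          exact this
        exact Nat.lt_of_mul_lt_mul_left h1
      have hνg := nu_tri _ ((a:ℕ):ℝ) (q:ℝ) (by exact_mod_cast ha1) hqr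
        (region_gC p q a hp0 hq0 ha1 hap)
      rw [hmeq, hνf, hνg]
      have h1 : q - 1 ≤ (q - 1) * (p - a) := Nat.le_mul_of_pos_right _ (by omega)
      have h2 : Nat.gcd p q ≤ (q - 1) * (p - a) := le_trans (by omega) h1
      have h3 : (Nat.gcd p q : ℝ) ≤ ((q:ℝ) - 1) * ((p:ℝ) - a) := by
        have hc : ((((q-1)*(p-a)) : ℕ) : ℝ) = ((q:ℝ) - 1) * ((p:ℝ) - (a:ℝ)) := by
          push_cast [Nat.cast_sub (by omega : 1 ≤ q), Nat.cast_sub hap.le]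
          ring
        calc (Nat.gcd p q : ℝ) ≤ (((q-1)*(p-a) : ℕ) : ℝ) := by exact_mod_cast h2
          _ = _ := hc
      nlinarith [h3]
    · -- a ≥ 1, b ≥ 1
      have hpb : p * 1 ≤ p * b := Nat.mul_le_mul_left p hb1
      have hqa : q * 1 ≤ q * a := Nat.mul_le_mul_left q ha1
      have hap : a < p := by
        have h1 : q * a < p * q := by linarith
        rw [Nat.mul_comm p q] at h1
        exact Nat.lt_of_mul_lt_mul_left h1
      have hbq : b < q := by
        have h1 : p * b < p * q := by linarith
        exact Nat.lt_of_mul_lt_mul_left h1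
      have hνg := nu_mid _ (p:ℝ) (q:ℝ) (a:ℝ) (b:ℝ)
        (by exact_mod_cast ha1) (by exact_mod_cast hap) (by exact_mod_cast hb1)
        (by exact_mod_cast hbq) (by exact_mod_cast hconstr)
        (region_gA p q a b hp0 hq0 ha1 hap hb1 hbq hconstr)
      rw [hmeq, hνf, hνg]
      set k : ℕ := p * q - (q * a + p * b) with hk
      have hkeq : (q * a + p * b) + k = p * q := Nat.add_sub_cancel' hconstr.le
      have hkpos : 0 < k := by linarith
      have hdvd : Nat.gcd p q ∣ k := by
        have h1 : Nat.gcd p q ∣ p * q := Dvd.dvd.mul_right (Nat.gcd_dvd_left p q) q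
        have h2 : Nat.gcd p q ∣ q * a + p * b :=
          Nat.dvd_add (Dvd.dvd.mul_right (Nat.gcd_dvd_right p q) a)
            (Dvd.dvd.mul_right (Nat.gcd_dvd_left p q) b)
        exact Nat.dvd_sub h1 h2
      have hdk : Nat.gcd p q ≤ k := Nat.le_of_dvd hkpos hdvd
      have hkr : (q:ℝ) * a + (p:ℝ) * b + (k:ℝ) = (p:ℝ) * q := by exact_mod_cast hkeq
      have hdkr : (Nat.gcd p q : ℝ) ≤ (k:ℝ) := by exact_mod_cast hdk
      linarith
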